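/- Let A_Γ = ⟨a_σ : σ ∈ Γ⟩ be a T-algebra and let x ∈ X(Γ). Then every finite intersection of sets from {ℕ ∖ a_{x↾(α+1)} : α+1 ≤ λ_x} is infinite, and the family of all such finite intersections is a filter base for an ultrafilter U_x on the Boolean subalgebra B_Γ of P(ℕ) generated by {a_σ : σ ∈ Γ}: for every b ∈ B_Γ, exactly one of b, ℕ ∖ b contains some finite intersection from this family. -/

import Mathlib

open Set

noncomputable section

/-- The least uncountable ordinal `ω₁`. -/
def omega1 : Ordinal := (Cardinal.aleph 1).ord

/-- `⋃_{γ ∈ F} a_γ` for a finite set `F` of indices. -/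
def unionFin (a : Ordinal → Set ℕ) (F : Finset Ordinal) : Set ℕ :=
  ⋃ γ ∈ F, a γ

/-- A sequence of subsets of `ℕ`, with indices from a (downward closed) domain `D`
of ordinals, is coherent if for all `α ≤ β` in the domain there is a finite `F ⊆ α`
with `a α ∩ a β ⊆ ⋃_{γ∈F} a γ` or `a α ⊆ a β ∪ ⋃_{γ∈F} a γ`. -/
def CoherentOn (D : Set Ordinal) (a : Ordinal → Set ℕ) : Prop :=
  ∀ α β : Ordinal, α ≤ β → β ∈ D →
    ∃ F : Finset Ordinal, (∀ γ ∈ F, γ < α) ∧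
      (a α ∩ a β ⊆ unionFin a F ∨ a α ⊆ a β ∪ unionFin a F)

/-- Properness: no `a β` is contained in a finite union of earlier terms. -/
def ProperOn (D : Set Ordinal) (a : Ordinal → Set ℕ) : Prop :=
  ∀ β ∈ D, ∀ F : Finset Ordinal, (∀ γ ∈ F, γ < β) → ¬ a β ⊆ unionFin a F

/-- `â_β = { α ≤ β : a α ∖ a β ⊆ ⋃_{γ∈F} a γ for some finite F ⊆ α }`. -/
def hatA (a : Ordinal → Set ℕ) (β : Ordinal) : Set Ordinal :=
  { α | α ≤ β ∧ ∃ F : Finset Ordinal, (∀ γ ∈ F, γ < α) ∧ a α \ a β ⊆ unionFin a F }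

/-- The topology `τ(A)` on `λ + 1 = {α : α ≤ λ}` generated by the subbase
consisting of the sets `â_β` and their complements, `β < λ`. -/
def tau (lam : Ordinal) (a : Ordinal → Set ℕ) :
    TopologicalSpace {α : Ordinal // α ≤ lam} :=
  TopologicalSpace.generateFrom
    { s | ∃ β < lam, s = {x : {α : Ordinal // α ≤ lam} | x.1 ∈ hatA a β} ∨
                     s = {x : {α : Ordinal // α ≤ lam} | x.1 ∈ hatA a β}ᶜ }

/-- The subspace `ω₁ = {α : α < ω₁}` of `(ω₁+1, τ(A))`. -/
def tauSub (a : Ordinal → Set ℕ) : TopologicalSpace {y : Ordinal // y < omega1} :=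
  TopologicalSpace.induced
    (fun y : {y : Ordinal // y < omega1} => (⟨y.1, y.2.le⟩ : {α : Ordinal // α ≤ omega1}))
    (tau omega1 a)

/-- Closed unbounded subsets of `ω₁`. -/
def IsClub' (C : Set Ordinal) : Prop :=
  C ⊆ Iio omega1 ∧
  (∀ α < omega1, ∃ β ∈ C, α ≤ β) ∧
  (∀ δ, δ < omega1 → δ ≠ 0 → (∀ α < δ, ∃ β ∈ C, α < β ∧ β < δ) → δ ∈ C)

/-- Stationary subsets of `ω₁`: sets meeting every club. -/
def IsStationary' (S : Set Ordinal) : Prop :=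
  ∀ C : Set Ordinal, IsClub' C → (S ∩ C).Nonempty

/-- The stationary covering property for a coherent sequence whose index domain is `D`:
if the sequence has length `ω₁` (i.e. `Iio ω₁ ⊆ D`), then every stationary `S ⊆ ω₁`
together with some finite `F` covers, i.e. `⋃_{γ ∈ S ∪ F} â_γ = ω₁`.  (Sequences of
length `< ω₁` have the ScP by convention.) -/
def HasScP (D : Set Ordinal) (a : Ordinal → Set ℕ) : Prop :=
  Iio omega1 ⊆ D →
    ∀ S : Set Ordinal, S ⊆ Iio omega1 → IsStationary' S →
      ∃ F : Finset Ordinal, (⋃ γ ∈ S ∪ (↑F : Set Ordinal), hatA a γ) = Iio omega1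

/-- A node of the tree `2^{≤ω₁}`: a function `val` defined on the ordinals `< len`
(with the canonical value `false` beyond `len`). -/
structure Node where
  len : Ordinal
  val : Ordinal → Bool
  canon : ∀ α, len ≤ α → val α = false

open Classical in
/-- The restriction `x ↾ β`. -/
def Node.restrict (x : Node) (β : Ordinal) : Node where
  len := β
  val := fun α => if α < β then x.val α else false
  canon := fun α h => if_neg (not_lt.2 h)

/-- `τ.Extends σ` means `σ ⊆ τ`, i.e. `τ` extends `σ`. -/
def Node.Extends (τ σ : Node) : Prop :=
  σ.len ≤ τ.len ∧ ∀ α < σ.len, τ.val α = σ.val α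

/-- Successor ordinals. -/
def IsSucc (o : Ordinal) : Prop := ∃ β, o = β + 1

open Classical in
/-- `σ†`: if `σ` has successor length `β+1`, the node agreeing with `σ` except at `β`;
otherwise `σ` itself. -/
def Node.dagger (σ : Node) : Node :=
  if h : IsSucc σ.len then
    { len := σ.len
      val := fun α => if α = Classical.choose h then !(σ.val α) else σ.val α
      canon := by
        intro α hα
        have hs := Classical.choose_spec h
        have hne : α ≠ Classical.choose h := by
          intro he
          rw [hs, he] at hα
          rw [Ordinal.add_one_eq_succ] at hα
          exact (not_le.2 (Order.lt_succ (Classical.choose h))) hα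
        show (if α = Classical.choose h then !(σ.val α) else σ.val α) = false
        rw [if_neg hne]
        exact σ.canon α hα }
  else σ

open Classical in
/-- `σ ⌢ b` : the node `σ` extended by one value `b`. -/
def Node.snoc (σ : Node) (b : Bool) : Node where
  len := σ.len + 1
  val := fun α => if α = σ.len then b else σ.val α
  canon := by
    intro α hα
    have h1 : σ.len < α := by
      have h2 : σ.len < σ.len + 1 := by
        rw [Ordinal.add_one_eq_succ]; exact Order.lt_succ σ.len
      exact lt_of_lt_of_le h2 hα
    show (if α = σ.len then b else σ.val α) = false
    rw [if_neg h1.ne']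
    exact σ.canon α h1.le

open Classical in
/-- `x ⌢ σ` : concatenation of nodes. -/
def Node.append (x σ : Node) : Node where
  len := x.len + σ.len
  val := fun α => if α < x.len then x.val α else σ.val (α - x.len)
  canon := by
    intro α hα
    have h1 : ¬ α < x.len := not_lt.2 (le_trans (le_self_add : x.len ≤ x.len + σ.len) hα)
    show (if α < x.len then x.val α else σ.val (α - x.len)) = false
    rw [if_neg h1]
    apply σ.canon
    by_contra h2
    rw [not_le] at h2
    have h3 : α ≤ x.len + (α - x.len) := Ordinal.le_add_sub α x.len
    have h4 : x.len + (α - x.len) < x.len + σ.len := (add_lt_add_iff_left x.len).2 h2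
    exact absurd hα (not_le.2 (lt_of_le_of_lt h3 h4))

/-- A subtree of `2^{<ω₁}` that is downward closed, twinned and has no maximal elements. -/
structure GoodTree (Γ : Set Node) : Prop where
  lt_omega1 : ∀ σ ∈ Γ, σ.len < omega1
  downward : ∀ σ ∈ Γ, ∀ β ≤ σ.len, σ.restrict β ∈ Γ
  twinned : ∀ σ ∈ Γ, σ.dagger ∈ Γ
  noMax : ∀ σ ∈ Γ, ∃ τ ∈ Γ, σ.len < τ.len ∧ τ.Extends σ

/-- `X(Γ)`: the maximal branches of `Γ`, i.e. the minimal elements of `2^{≤ω₁} ∖ Γ`. -/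
def XGamma (Γ : Set Node) : Set Node :=
  { x | x.len ≤ omega1 ∧ x ∉ Γ ∧ ∀ β < x.len, x.restrict β ∈ Γ }

/-- The index domain of the branch sequence `A_{Γ,x}`. -/
def branchDomain (Γ : Set Node) (x : Node) : Set Ordinal :=
  { α | α + 1 ≤ x.len ∧ x.restrict (α + 1) ∈ Γ }

/-- The branch sequence `A_{Γ,x}`, `a^x_α = a_{x ↾ (α+1)}`. -/
def branchSeq (a : Node → Set ℕ) (x : Node) : Ordinal → Set ℕ :=
  fun α => a (x.restrict (α + 1))

/-- A `𝕋`-algebra on the tree `Γ`. -/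
structure IsTAlgebra (Γ : Set Node) (a : Node → Set ℕ) : Prop where
  tree : GoodTree Γ
  empty_of_not_succ : ∀ σ ∈ Γ, ¬ IsSucc σ.len → a σ = ∅
  compl_dagger : ∀ σ ∈ Γ, IsSucc σ.len → a σ.dagger = (a σ)ᶜ
  branch_coherent : ∀ x : Node, x.len ≤ omega1 →
    CoherentOn (branchDomain Γ x) (branchSeq a x)
  branch_proper : ∀ x : Node, x.len ≤ omega1 →
    ProperOn (branchDomain Γ x) (branchSeq a x)

/-- The Boolean subalgebra of `P(ℕ)` generated by a family `G`. -/
inductive GenBool (G : Set (Set ℕ)) : Set ℕ → Prop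
  | basic (s : Set ℕ) : s ∈ G → GenBool G s
  | empty : GenBool G ∅
  | compl (s : Set ℕ) : GenBool G s → GenBool G sᶜ
  | inter (s t : Set ℕ) : GenBool G s → GenBool G t → GenBool G (s ∩ t)

/-- `B_Γ`: the Boolean subalgebra of `P(ℕ)` generated by `{a_σ : σ ∈ Γ}`. -/
def BGamma (Γ : Set Node) (a : Node → Set ℕ) : Set (Set ℕ) :=
  { b | GenBool { s | ∃ σ ∈ Γ, s = a σ } b }

/-- A finite intersection from the family `{ℕ ∖ a_{x↾(α+1)} : α + 1 ≤ λ_x}`. -/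
def finInterCompl (a : Node → Set ℕ) (x : Node) (F : Finset Ordinal) : Set ℕ :=
  ⋂ α ∈ F, (a (x.restrict (α + 1)))ᶜ

/-- The ultrafilter `U_x` on `B_Γ` generated by the finite intersections of
`{ℕ ∖ a_{x↾(α+1)} : α + 1 ≤ λ_x}`. -/
def Ux (Γ : Set Node) (a : Node → Set ℕ) (x : Node) : Set (Set ℕ) :=
  { b | b ∈ BGamma Γ a ∧
    ∃ F : Finset Ordinal, (∀ α ∈ F, α + 1 ≤ x.len) ∧ finInterCompl a x F ⊆ b }

/-- The Stone topology on `X(Γ)`, with subbasic open sets `{z : b ∈ U_z}`, `b ∈ B_Γ`. -/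
def stoneTop (Γ : Set Node) (a : Node → Set ℕ) :
    TopologicalSpace {z : Node // z ∈ XGamma Γ} :=
  TopologicalSpace.generateFrom
    { s | ∃ b ∈ BGamma Γ a, s = { z : {z : Node // z ∈ XGamma Γ} | b ∈ Ux Γ a z.1 } }

/-- An ultrafilter on a Boolean subalgebra `B` of `P(ℕ)`. -/
def IsUltrafilterOn (B U : Set (Set ℕ)) : Prop :=
  U ⊆ B ∧
  (∀ s ∈ U, ∀ t ∈ U, s ∩ t ∈ U) ∧
  (∀ s ∈ U, ∀ t ∈ B, s ⊆ t → t ∈ U) ∧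
  ∅ ∉ U ∧
  (∀ b ∈ B, Xor' (b ∈ U) (bᶜ ∈ U))

/-- The length-lexicographic (strict) order on finite binary strings. -/
def LenLexLT (σ τ : Node) : Prop :=
  σ.len < τ.len ∨ (σ.len = τ.len ∧ ∃ i < σ.len, σ.val i = false ∧ τ.val i = true ∧
    ∀ j < i, σ.val j = τ.val j)

/-- `e` is the standard length-lexicographic enumeration of `2^{<ω}`. -/
def IsStdEnum (e : ℕ → Node) : Prop :=
  (∀ k, (e k).len < Ordinal.omega0) ∧
  (∀ σ : Node, σ.len < Ordinal.omega0 → ∃ k, e k = σ) ∧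
  (∀ k l : ℕ, k < l → LenLexLT (e k) (e l))

/-- `⋃_{k<n} c^x_k` where `c^x_n = a^x_{e(n)} ∖ ⋃_{k<n} c^x_k` (recursively). -/
def cUnion (a : Node → Set ℕ) (x : Node) (eb : ℕ → Ordinal) : ℕ → Set ℕ
  | 0 => ∅
  | n + 1 => cUnion a x eb n ∪ (a (x.restrict (eb n + 1)) \ cUnion a x eb n)

/-- `c^x_n = a^x_{e(n)} ∖ ⋃_{k<n} c^x_k`. -/
def cSeq (a : Node → Set ℕ) (x : Node) (eb : ℕ → Ordinal) (n : ℕ) : Set ℕ :=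
  a (x.restrict (eb n + 1)) \ cUnion a x eb n

/-- `{x ⌢ σ : σ ∈ 2^{<ω}}`. -/
def appendSet (x : Node) : Set Node :=
  { τ | ∃ σ : Node, σ.len < Ordinal.omega0 ∧ τ = x.append σ }

/-- The defining equations of the extension `A_Γ[π,x]`:
`a_x = ∅`, `a_{x⌢(σ⌢0)} = ⋃{c^x_k : σ⌢1 ⊆ σ_{π(k)}}`, `a_{x⌢(σ⌢1)} = ℕ ∖ a_{x⌢(σ⌢0)}`. -/
def ExtEquations (e : ℕ → Node) (π : ℕ → ℕ) (a : Node → Set ℕ) (x : Node)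
    (eb : ℕ → Ordinal) (a' : Node → Set ℕ) : Prop :=
  a' x = ∅ ∧
  ∀ σ : Node, σ.len < Ordinal.omega0 →
    (a' (x.append (σ.snoc false)) =
      ⋃ k ∈ { k : ℕ | (e (π k)).Extends (σ.snoc true) }, cSeq a x eb k) ∧
    (a' (x.append (σ.snoc true)) = (a' (x.append (σ.snoc false)))ᶜ)

/-- The full tree `2^{<ω₁}`. -/
def GammaFull : Set Node := { σ | σ.len < omega1 }

theorem natLtOmega1 (n : ℕ) : (n : Ordinal) < omega1 := by
  have h1 : (n : Ordinal) < Ordinal.omega0 := Ordinal.nat_lt_omega0 n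
  have h2 : Ordinal.omega0 < omega1 := by
    rw [omega1, ← Cardinal.ord_aleph0]
    exact Cardinal.ord_lt_ord.2 (by rw [← Cardinal.aleph_zero]
                                    exact Cardinal.aleph_lt_aleph.2 zero_lt_one)
  exact h1.trans h2


theorem Node.ext' : ∀ {x y : Node}, x.len = y.len → (∀ α, x.val α = y.val α) → x = y
  | ⟨l1, v1, c1⟩, ⟨l2, v2, c2⟩, h1, h2 => by
    dsimp at h1 h2
    subst h1
    have : v1 = v2 := funext h2
    subst this
    rfl

theorem Node.restrict_len (x : Node) (β : Ordinal) : (x.restrict β).len = β := rfl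

theorem Node.restrict_val (x : Node) (β α : Ordinal) :
    (x.restrict β).val α = if α < β then x.val α else false := rfl

theorem Node.restrict_restrict (x : Node) {β γ : Ordinal} (h : γ ≤ β) :
    (x.restrict β).restrict γ = x.restrict γ := by
  apply Node.ext'
  · rfl
  intro α
  by_cases hα : α < γ
  · simp [Node.restrict_val, hα, hα.trans_le h]
  · simp [Node.restrict_val, hα]

theorem Node.restrict_len_self (x : Node) : x.restrict x.len = x := by
  apply Node.ext'
  · rfl
  intro α
  by_cases hα : α < x.len
  · simp [Node.restrict_val, hα]
  · simp [Node.restrict_val, hα, x.canon α (not_lt.1 hα)]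

theorem Node.Extends.refl' (σ : Node) : σ.Extends σ := ⟨le_rfl, fun _ _ => rfl⟩

theorem Node.Extends.trans' {a b c : Node} (h1 : c.Extends b) (h2 : b.Extends a) :
    c.Extends a :=
  ⟨h2.1.trans h1.1, fun α h => (h1.2 α (h.trans_le h2.1)).trans (h2.2 α h)⟩

theorem Node.restrict_of_extends {τ σ : Node} (h : τ.Extends σ) {δ : Ordinal}
    (hδ : δ ≤ σ.len) : τ.restrict δ = σ.restrict δ := by
  apply Node.ext'
  · rfl
  intro α
  by_cases hα : α < δ
  · simp [Node.restrict_val, hα, h.2 α (hα.trans_le hδ)]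
  · simp [Node.restrict_val, hα]

theorem Node.restrict_eq_of_extends {τ σ : Node} (h : τ.Extends σ) :
    τ.restrict σ.len = σ := by
  rw [Node.restrict_of_extends h le_rfl, Node.restrict_len_self]

theorem ordSuccInj {a b : Ordinal} (h : a + 1 = b + 1) : a = b := by
  rwa [Ordinal.add_one_eq_succ, Ordinal.add_one_eq_succ, Order.succ_eq_succ_iff] at h

theorem Node.dagger_spec {σ : Node} {β : Ordinal} (h : σ.len = β + 1) :
    σ.dagger.len = σ.len ∧
      ∀ α, σ.dagger.val α = if α = β then !(σ.val α) else σ.val α := by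
  have hs : IsSucc σ.len := ⟨β, h⟩
  have hc : Classical.choose hs = β := ordSuccInj ((Classical.choose_spec hs).symm.trans h)
  constructor
  · unfold Node.dagger
    rw [dif_pos hs]
  · intro α
    unfold Node.dagger
    rw [dif_pos hs]
    show (if α = Classical.choose hs then !(σ.val α) else σ.val α) = _
    rw [hc]

theorem GoodTree.step {Γ : Set Node} (hΓ : GoodTree Γ) {σ : Node} (hσ : σ ∈ Γ) :
    ∃ τ ∈ Γ, τ.len = σ.len + 1 ∧ τ.Extends σ := by
  obtain ⟨τ', hτ', hlt, hext⟩ := hΓ.noMax σ hσ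
  have hle : σ.len + 1 ≤ τ'.len := Order.add_one_le_iff.mpr hlt
  have hlt1 : σ.len < σ.len + 1 := by
    rw [Ordinal.add_one_eq_succ]; exact Order.lt_succ _
  refine ⟨τ'.restrict (σ.len + 1), hΓ.downward _ hτ' _ hle, rfl, le_of_lt hlt1, ?_⟩
  intro α hα
  rw [Node.restrict_val, if_pos (hα.trans hlt1)]
  exact hext.2 α hα

theorem XGamma.len_not_succ {Γ : Set Node} (hΓ : GoodTree Γ) {x : Node}
    (hx : x ∈ XGamma Γ) : ¬ IsSucc x.len := by
  rintro ⟨β, hβ⟩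
  have hβlt : β < x.len := by
    rw [hβ, Ordinal.add_one_eq_succ]; exact Order.lt_succ _
  have hr : x.restrict β ∈ Γ := hx.2.2 β hβlt
  obtain ⟨τ, hτ, hlen, hext⟩ := hΓ.step hr
  rw [Node.restrict_len] at hlen
  have hvals : ∀ α < β, τ.val α = x.val α := by
    intro α hα
    rw [hext.2 α hα, Node.restrict_val, if_pos hα]
  by_cases hv : τ.val β = x.val β
  · have : τ = x := by
      apply Node.ext'
      · exact hlen.trans hβ.symm
      intro α
      rcases lt_trichotomy α β with h | rfl | h
      · exact hvals α h
      · exact hv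
      · have h1 : x.len ≤ α := by rw [hβ]; exact Order.add_one_le_iff.mpr h
        rw [τ.canon α (by rw [hlen]; exact Order.add_one_le_iff.mpr h), x.canon α h1]
    exact hx.2.1 (this ▸ hτ)
  · obtain ⟨hdl, hdv⟩ := Node.dagger_spec hlen
    have : τ.dagger = x := by
      apply Node.ext'
      · exact (hdl.trans hlen).trans hβ.symm
      intro α
      rw [hdv α]
      rcases lt_trichotomy α β with h | rfl | h
      · rw [if_neg h.ne, hvals α h]
      · rw [if_pos rfl]
        revert hv; cases τ.val α <;> cases x.val α <;> simp
      · have h1 : x.len ≤ α := by rw [hβ]; exact Order.add_one_le_iff.mpr h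
        rw [if_neg h.ne', τ.canon α (by rw [hlen]; exact Order.add_one_le_iff.mpr h),
          x.canon α h1]
    exact hx.2.1 (this ▸ hΓ.twinned τ hτ)

theorem ordArith (β : Ordinal) (k : ℕ) : (β + (k : Ordinal)) + 1 = (β + 1) + (k : Ordinal) := by
  rw [add_assoc, add_assoc]
  congr 1
  rw [← Nat.cast_one, ← Nat.cast_add, ← Nat.cast_add, Nat.add_comm]


theorem finInterCompl_infinite {Γ : Set Node} {a : Node → Set ℕ} (hT : IsTAlgebra Γ a)
    {x : Node} (hx : x ∈ XGamma Γ) (F : Finset Ordinal) (hF : ∀ α ∈ F, α + 1 ≤ x.len) :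
    (finInterCompl a x F).Infinite := by
  rcases F.eq_empty_or_nonempty with rfl | hne
  · have : finInterCompl a x ∅ = Set.univ := by simp [finInterCompl]
    rw [this]; exact Set.infinite_univ
  have hns := XGamma.len_not_succ hT.tree hx
  set μ := F.max' hne with hμdef
  set β := μ + 1 with hβdef
  have hμβ : μ < β := by rw [hβdef, Ordinal.add_one_eq_succ]; exact Order.lt_succ _
  have hμ1 : μ + 1 ≤ x.len := hF μ (F.max'_mem hne)
  have hβlt : β < x.len := lt_of_le_of_ne hμ1 (fun h => hns ⟨μ, h.symm⟩)
  have hβ1 : β + 1 < x.len :=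
    lt_of_le_of_ne (Order.add_one_le_iff.mpr hβlt) (fun h => hns ⟨β, h.symm⟩)
  have step : ∀ σ : Node, ∃ τ : Node, σ ∈ Γ → (τ ∈ Γ ∧ τ.len = σ.len + 1 ∧ τ.Extends σ) := by
    intro σ
    by_cases h : σ ∈ Γ
    · obtain ⟨τ, h1, h2, h3⟩ := hT.tree.step h
      exact ⟨τ, fun _ => ⟨h1, h2, h3⟩⟩
    · exact ⟨σ, fun h' => absurd h' h⟩
  choose g hg using step
  set z : ℕ → Node := fun k => g^[k] (x.restrict (β + 1)) with hzdef
  have hz0 : z 0 = x.restrict (β + 1) := rfl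
  have hzsucc : ∀ k, z (k + 1) = g (z k) := fun k => Function.iterate_succ_apply' g k _
  have hz0Γ : z 0 ∈ Γ := hx.2.2 (β + 1) hβ1
  have hzmain : ∀ k, z k ∈ Γ ∧ (z k).len = (β + 1) + (k : Ordinal) := by
    intro k
    induction k with
    | zero => exact ⟨hz0Γ, by simp [hz0, Node.restrict_len]⟩
    | succ k ih =>
      obtain ⟨hmem, hElen, _⟩ := hg (z k) ih.1
      rw [← hzsucc k] at hmem hElen
      refine ⟨hmem, ?_⟩
      rw [hElen, ih.2, add_assoc]
      norm_cast
  have hzext : ∀ k j, j ≤ k → (z k).Extends (z j) := by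
    intro k
    induction k with
    | zero => intro j hj; rw [Nat.le_zero.mp hj]; exact Node.Extends.refl' _
    | succ k ih =>
      intro j hj
      have hstep : (z (k + 1)).Extends (z k) := by
        have := (hg (z k) (hzmain k).1).2.2
        rwa [← hzsucc k] at this
      rcases Nat.lt_or_ge j (k + 1) with h | h
      · exact hstep.trans' (ih j (Nat.lt_succ_iff.mp h))
      · rw [Nat.le_antisymm hj h]; exact Node.Extends.refl' _
  have hrestr : ∀ (k : ℕ) (δ : Ordinal), δ ≤ β + 1 → (z k).restrict δ = x.restrict δ := by
    intro k δ hδ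
    have hδ' : δ ≤ (z 0).len := by rw [hz0]; exact hδ
    have h1 : (z k).restrict δ = (z 0).restrict δ :=
      Node.restrict_of_extends (hzext k 0 (Nat.zero_le k)) hδ'
    rw [h1, hz0, Node.restrict_restrict x hδ]
  have hpick : ∀ k, ∃ m : ℕ, m ∈ a (z k) ∧
      (∀ α ∈ F, m ∉ a (x.restrict (α + 1))) ∧ (∀ j < k, m ∉ a (z j)) := by
    intro k
    set G : Finset Ordinal :=
      F ∪ (Finset.range k).image (fun j : ℕ => β + (j : Ordinal)) with hGdef
    have hGlt : ∀ γ ∈ G, γ < β + (k : Ordinal) := by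
      intro γ hγ
      rw [hGdef, Finset.mem_union] at hγ
      rcases hγ with hγ | hγ
      · exact lt_of_le_of_lt (F.le_max' γ hγ)
          (lt_of_lt_of_le hμβ le_self_add)
      · obtain ⟨j, hj, rfl⟩ := Finset.mem_image.mp hγ
        exact (add_lt_add_iff_left β).2 (by exact_mod_cast Finset.mem_range.mp hj)
    have hlen' : (β + (k : Ordinal)) + 1 = (z k).len := by
      rw [ordArith, (hzmain k).2]
    have hdom : (β + (k : Ordinal)) ∈ branchDomain Γ (z k) := by
      refine ⟨hlen'.le, ?_⟩
      rw [hlen', Node.restrict_len_self]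
      exact (hzmain k).1
    have hprop := hT.branch_proper (z k) (le_of_lt (hT.tree.lt_omega1 _ (hzmain k).1))
      (β + (k : Ordinal)) hdom G hGlt
    rw [Set.not_subset] at hprop
    obtain ⟨m, hm1, hm2⟩ := hprop
    have hm1' : m ∈ a (z k) := by
      have : branchSeq a (z k) (β + (k : Ordinal)) = a (z k) := by
        rw [branchSeq, hlen', Node.restrict_len_self]
      rwa [this] at hm1
    have hm2' : ∀ γ ∈ G, m ∉ a ((z k).restrict (γ + 1)) := by
      intro γ hγ hmem
      exact hm2 (Set.mem_biUnion hγ hmem)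
    refine ⟨m, hm1', ?_, ?_⟩
    · intro α hα
      have hαμ : α ≤ μ := F.le_max' α hα
      have hα1 : α + 1 ≤ β + 1 :=
        le_trans (add_le_add_left (hαμ.trans hμβ.le) 1) le_rfl
      have := hm2' α (Finset.mem_union_left _ hα)
      rwa [hrestr k (α + 1) hα1] at this
    · intro j hj hmem
      have hγG : β + (j : ℕ) ∈ G :=
        Finset.mem_union_right _ (Finset.mem_image.mpr ⟨j, Finset.mem_range.mpr hj, rfl⟩)
      have heq : (z k).restrict ((β + (j : ℕ)) + 1) = z j := by
        have h1 : (β + (j : Ordinal)) + 1 = (z j).len := by rw [ordArith, (hzmain j).2]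
        rw [h1, Node.restrict_eq_of_extends (hzext k j hj.le)]
      exact hm2' _ hγG (heq ▸ hmem)
  choose n hn1 hn2 hn3 using hpick
  have hinj : Function.Injective n := by
    intro j k hjk
    by_contra hne'
    rcases Nat.lt_or_ge j k with h | h
    · have := hn1 j
      rw [hjk] at this
      exact hn3 k j h this
    · have hh : k < j := lt_of_le_of_ne h (Ne.symm hne')
      have := hn1 k
      rw [← hjk] at this
      exact hn3 j k hh this
  apply Set.infinite_of_injective_forall_mem hinj
  intro k
  simp only [finInterCompl, Set.mem_iInter, Set.mem_compl_iff]
  exact fun α hα => hn2 k α hα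

theorem finInterCompl_anti {a : Node → Set ℕ} {x : Node} {F G : Finset Ordinal}
    (h : F ⊆ G) : finInterCompl a x G ⊆ finInterCompl a x F := by
  intro p hp
  simp only [finInterCompl, Set.mem_iInter] at hp ⊢
  exact fun α hα => hp α (h hα)

theorem basic_case {Γ : Set Node} {a : Node → Set ℕ} (hT : IsTAlgebra Γ a)
    {x : Node} (hx : x ∈ XGamma Γ) {σ : Node} (hσ : σ ∈ Γ) :
    (∃ F : Finset Ordinal, (∀ α ∈ F, α + 1 ≤ x.len) ∧ finInterCompl a x F ⊆ a σ) ∨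
    (∃ F : Finset Ordinal, (∀ α ∈ F, α + 1 ≤ x.len) ∧ finInterCompl a x F ⊆ (a σ)ᶜ) := by
  by_cases hsucc : IsSucc σ.len
  swap
  · right
    refine ⟨∅, by simp, ?_⟩
    rw [hT.empty_of_not_succ σ hσ hsucc]
    simp
  obtain ⟨β, hβ⟩ := hsucc
  set D := {ξ : Ordinal | ξ < σ.len ∧ ξ < x.len ∧ σ.val ξ ≠ x.val ξ} with hDdef
  by_cases hD : D.Nonempty
  · -- there is a disagreement; take the least one
    obtain ⟨ξ, hξD, hξmin⟩ := Ordinal.lt_wf.has_min D hD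
    obtain ⟨hξσ, hξx, hξne⟩ := hξD
    have hagree : ∀ α < ξ, σ.val α = x.val α := by
      intro α hα
      by_contra hne'
      exact hξmin α ⟨hα.trans hξσ, hα.trans hξx, hne'⟩ hα
    have hξ1σ : ξ + 1 ≤ σ.len := Order.add_one_le_iff.mpr hξσ
    have hξ1x : ξ + 1 ≤ x.len := Order.add_one_le_iff.mpr hξx
    set τ := σ.restrict (ξ + 1) with hτdef
    have hτΓ : τ ∈ Γ := hT.tree.downward σ hσ (ξ + 1) hξ1σ
    have hτlen : τ.len = ξ + 1 := rfl
    have hτd : τ.dagger = x.restrict (ξ + 1) := by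
      obtain ⟨hdl, hdv⟩ := Node.dagger_spec hτlen
      apply Node.ext'
      · exact hdl
      intro α
      rw [hdv α]
      by_cases hαξ : α = ξ
      · subst hαξ
        have h1 : τ.val α = σ.val α := by
          rw [hτdef, Node.restrict_val, if_pos]
          rw [Ordinal.add_one_eq_succ]; exact Order.lt_succ _
        have h2 : (x.restrict (α + 1)).val α = x.val α := by
          rw [Node.restrict_val, if_pos]
          rw [Ordinal.add_one_eq_succ]; exact Order.lt_succ _
        rw [if_pos rfl, h1, h2]
        revert hξne; cases σ.val α <;> cases x.val α <;> simp
      · rw [if_neg hαξ, hτdef, Node.restrict_val, Node.restrict_val]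
        by_cases hα1 : α < ξ + 1
        · have hαlt : α < ξ := lt_of_le_of_ne (Order.lt_add_one_iff.mp hα1) hαξ
          rw [if_pos hα1, if_pos hα1, hagree α hαlt]
        · rw [if_neg hα1, if_neg hα1]
    have haτ : a (x.restrict (ξ + 1)) = (a τ)ᶜ := by
      rw [← hτd]
      exact hT.compl_dagger τ hτΓ ⟨ξ, hτlen⟩
    -- coherence along the branch through σ
    have hξβ : ξ ≤ β := by
      rw [hβ, Ordinal.add_one_eq_succ, Order.lt_succ_iff] at hξσ
      exact hξσ
    have hdomβ : β ∈ branchDomain Γ σ := by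
      refine ⟨hβ.symm.le, ?_⟩
      rw [← hβ, Node.restrict_len_self]
      exact hσ
    obtain ⟨G, hGlt, hcase⟩ := hT.branch_coherent σ (le_of_lt (hT.tree.lt_omega1 σ hσ))
      ξ β hξβ hdomβ
    have hseqβ : branchSeq a σ β = a σ := by
      rw [branchSeq, ← hβ, Node.restrict_len_self]
    have hseqξ : branchSeq a σ ξ = a τ := rfl
    have hresG : ∀ γ ∈ G, σ.restrict (γ + 1) = x.restrict (γ + 1) := by
      intro γ hγ
      apply Node.ext'
      · rfl
      intro α
      rw [Node.restrict_val, Node.restrict_val]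
      by_cases hα : α < γ + 1
      · have hαξ : α < ξ := lt_of_lt_of_le hα (Order.add_one_le_iff.mpr (hGlt γ hγ))
        rw [if_pos hα, if_pos hα, hagree α hαξ]
      · rw [if_neg hα, if_neg hα]
    have hFbound : ∀ α ∈ G ∪ {ξ}, α + 1 ≤ x.len := by
      intro α hα
      rcases Finset.mem_union.mp hα with h | h
      · exact le_trans (add_le_add_left (hGlt α h).le 1) hξ1x
      · rw [Finset.mem_singleton.mp h]; exact hξ1x
    have hmemτ : ∀ p ∈ finInterCompl a x (G ∪ {ξ}), p ∈ a τ ∧ ∀ γ ∈ G, p ∉ a (σ.restrict (γ + 1)) := by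
      intro p hp
      simp only [finInterCompl, Set.mem_iInter, Set.mem_compl_iff] at hp
      constructor
      · have h1 := hp ξ (Finset.mem_union_right _ (Finset.mem_singleton_self ξ))
        rw [haτ] at h1
        simpa using h1
      · intro γ hγ
        rw [hresG γ hγ]
        exact hp γ (Finset.mem_union_left _ hγ)
    rcases hcase with h | h
    · right
      refine ⟨G ∪ {ξ}, hFbound, ?_⟩
      intro p hp
      obtain ⟨hpτ, hpG⟩ := hmemτ p hp
      intro hpσ
      have : p ∈ unionFin (branchSeq a σ) G := by
        apply h
        rw [hseqξ, hseqβ] at *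
        exact ⟨hpτ, hpσ⟩
      obtain ⟨s, hs, hps⟩ := by
        simpa only [unionFin, Set.mem_iUnion, exists_prop] using this
      exact hpG s hs hps
    · left
      refine ⟨G ∪ {ξ}, hFbound, ?_⟩
      intro p hp
      obtain ⟨hpτ, hpG⟩ := hmemτ p hp
      have h1 : p ∈ a σ ∪ unionFin (branchSeq a σ) G := by
        rw [← hseqβ]
        exact h (hseqξ ▸ hpτ)
      rcases h1 with h1 | h1
      · exact h1
      · obtain ⟨s, hs, hps⟩ := by
          simpa only [unionFin, Set.mem_iUnion, exists_prop] using h1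
        exact absurd hps (hpG s hs)
  · -- no disagreement: σ is an initial segment of x
    have hlen : σ.len ≤ x.len := by
      by_contra hc
      push_neg at hc
      have hxσ : x = σ.restrict x.len := by
        apply Node.ext'
        · rfl
        intro α
        rw [Node.restrict_val]
        by_cases hα : α < x.len
        · rw [if_pos hα]
          by_contra hne'
          exact hD ⟨α, hα.trans hc, hα, fun h => hne' h.symm⟩
        · rw [if_neg hα, x.canon α (not_lt.1 hα)]
      exact absurd (hxσ ▸ hT.tree.downward σ hσ x.len hc.le) hx.2.1
    have hσx : σ = x.restrict σ.len := by
      apply Node.ext'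
      · rfl
      intro α
      rw [Node.restrict_val]
      by_cases hα : α < σ.len
      · rw [if_pos hα]
        by_contra hne'
        exact hD ⟨α, hα, hα.trans_le hlen, hne'⟩
      · rw [if_neg hα, σ.canon α (not_lt.1 hα)]
    right
    refine ⟨{β}, ?_, ?_⟩
    · intro α hα
      rw [Finset.mem_singleton.mp hα, ← hβ]
      exact hlen
    · intro p hp
      simp only [finInterCompl, Set.mem_iInter, Set.mem_compl_iff] at hp
      have := hp β (Finset.mem_singleton_self β)
      rw [hσx, hβ]
      exact this

/-- For a `𝕋`-algebra `A_Γ` and `x ∈ X(Γ)`: every finite intersection from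
`{ℕ ∖ a_{x↾(α+1)} : α+1 ≤ λ_x}` is infinite, and for every `b` in the Boolean
subalgebra `B_Γ` generated by `{a_σ : σ ∈ Γ}`, exactly one of `b`, `ℕ ∖ b`
contains one of these finite intersections. -/
theorem stmt3 (Γ : Set Node) (a : Node → Set ℕ) (hT : IsTAlgebra Γ a)
    (x : Node) (hx : x ∈ XGamma Γ) :
    (∀ F : Finset Ordinal, (∀ α ∈ F, α + 1 ≤ x.len) → (finInterCompl a x F).Infinite) ∧
    (∀ b ∈ BGamma Γ a,
      Xor' (∃ F : Finset Ordinal, (∀ α ∈ F, α + 1 ≤ x.len) ∧ finInterCompl a x F ⊆ b)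
           (∃ F : Finset Ordinal, (∀ α ∈ F, α + 1 ≤ x.len) ∧ finInterCompl a x F ⊆ bᶜ)) := by
  have hinf : ∀ F : Finset Ordinal, (∀ α ∈ F, α + 1 ≤ x.len) → (finInterCompl a x F).Infinite :=
    fun F hF => finInterCompl_infinite hT hx F hF
  refine ⟨hinf, ?_⟩
  have hnotboth : ∀ b : Set ℕ,
      (∃ F : Finset Ordinal, (∀ α ∈ F, α + 1 ≤ x.len) ∧ finInterCompl a x F ⊆ b) →
      (∃ F : Finset Ordinal, (∀ α ∈ F, α + 1 ≤ x.len) ∧ finInterCompl a x F ⊆ bᶜ) → False := by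
    rintro b ⟨F1, hF1, hs1⟩ ⟨F2, hF2, hs2⟩
    have hbound : ∀ α ∈ F1 ∪ F2, α + 1 ≤ x.len := by
      intro α hα
      rcases Finset.mem_union.mp hα with h | h
      · exact hF1 α h
      · exact hF2 α h
    obtain ⟨p, hp⟩ := (hinf (F1 ∪ F2) hbound).nonempty
    have hp1 : p ∈ b := hs1 (finInterCompl_anti Finset.subset_union_left hp)
    have hp2 : p ∈ bᶜ := hs2 (finInterCompl_anti Finset.subset_union_right hp)
    exact hp2 hp1
  have hatleast : ∀ b ∈ BGamma Γ a,
      (∃ F : Finset Ordinal, (∀ α ∈ F, α + 1 ≤ x.len) ∧ finInterCompl a x F ⊆ b) ∨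
      (∃ F : Finset Ordinal, (∀ α ∈ F, α + 1 ≤ x.len) ∧ finInterCompl a x F ⊆ bᶜ) := by
    intro b hb
    induction hb with
    | basic s hs =>
      obtain ⟨σ, hσ, rfl⟩ := hs
      exact basic_case hT hx hσ
    | empty =>
      right
      exact ⟨∅, by simp, by simp⟩
    | compl s hs ih =>
      rcases ih with ⟨F, h1, h2⟩ | ⟨F, h1, h2⟩
      · right
        rw [compl_compl]
        exact ⟨F, h1, h2⟩
      · left
        exact ⟨F, h1, h2⟩
    | inter s t hs ht ihs iht =>
      rcases ihs with ⟨F1, h1, h2⟩ | ⟨F1, h1, h2⟩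
      · rcases iht with ⟨F2, h3, h4⟩ | ⟨F2, h3, h4⟩
        · left
          refine ⟨F1 ∪ F2, ?_, ?_⟩
          · intro α hα
            rcases Finset.mem_union.mp hα with h | h
            · exact h1 α h
            · exact h3 α h
          · intro p hp
            exact ⟨h2 (finInterCompl_anti Finset.subset_union_left hp),
              h4 (finInterCompl_anti Finset.subset_union_right hp)⟩
        · right
          refine ⟨F2, h3, fun p hp => ?_⟩
          intro hmem
          exact h4 hp hmem.2
      · right
        refine ⟨F1, h1, fun p hp => ?_⟩
        intro hmem
        exact h2 hp hmem.1
  intro b hb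
  rcases hatleast b hb with h | h
  · exact Or.inl ⟨h, fun h' => hnotboth b h h'⟩
  · exact Or.inr ⟨h, fun h' => hnotboth b h' h⟩


end
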